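/- Let P ⊆ ℝ^q be a polyhedron with a vertex (i.e. containing no lines). Then an irredundant V-representation of P consists exactly of the set of all vertices of P together with the set of all extreme directions of P; i.e. P = conv(V) + cone(D) where V is the vertex set and D a set of representatives of the extreme rays, and no proper subset of V ∪ D generates P in this way. -/

import Mathlib

open Matrix Pointwise

/-- `p` is a vertex of `P`. -/
def IsVertexOf (q : ℕ) (P : Set (Fin q → ℝ)) (p : Fin q → ℝ) : Prop :=
  p ∈ P ∧ ∀ y ∈ P, ∀ z ∈ P, p = midpoint ℝ y z → y = z

/-- `F` is a face of the convex set `P`. -/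
def IsFaceOf (q : ℕ) (P F : Set (Fin q → ℝ)) : Prop :=
  F ⊆ P ∧ ∀ x ∈ P, ∀ y ∈ P, ∀ t : ℝ, 0 < t → t < 1 →
    t • x + (1 - t) • y ∈ F → x ∈ F ∧ y ∈ F

/-- `d` is an extreme direction of `P`. -/
def IsExtremeDirOf (q : ℕ) (P : Set (Fin q → ℝ)) (d : Fin q → ℝ) : Prop :=
  d ≠ 0 ∧ ∃ y ∈ P, IsFaceOf q P {z | ∃ t : ℝ, 0 ≤ t ∧ z = y + t • d}

/-- The conical hull (set of nonnegative combinations) of a set. -/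
def conicalHull (q : ℕ) (X : Set (Fin q → ℝ)) : Set (Fin q → ℝ) :=
  {y | ∃ (k : ℕ) (t : Fin k → ℝ) (f : Fin k → (Fin q → ℝ)),
    (∀ i, 0 ≤ t i) ∧ (∀ i, f i ∈ X) ∧ y = ∑ i, t i • f i}

namespace VRep

variable {q : ℕ}

lemma zero_mem_cone (X : Set (Fin q → ℝ)) : 0 ∈ conicalHull q X :=
  ⟨0, Fin.elim0, Fin.elim0, fun i => i.elim0, fun i => i.elim0, by simp⟩

lemma single_mem_cone {X : Set (Fin q → ℝ)} {d : Fin q → ℝ} (hd : d ∈ X) {t : ℝ} (ht : 0 ≤ t) :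
    t • d ∈ conicalHull q X :=
  ⟨1, fun _ => t, fun _ => d, fun _ => ht, fun _ => hd, by simp⟩

lemma add_mem_cone {X : Set (Fin q → ℝ)} {x y : Fin q → ℝ}
    (hx : x ∈ conicalHull q X) (hy : y ∈ conicalHull q X) : x + y ∈ conicalHull q X := by
  obtain ⟨k1, t1, f1, ht1, hf1, rfl⟩ := hx
  obtain ⟨k2, t2, f2, ht2, hf2, rfl⟩ := hy
  refine ⟨k1 + k2, Fin.append t1 t2, Fin.append f1 f2, ?_, ?_, ?_⟩
  · intro i
    induction i using Fin.addCases with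
    | left j => simpa using ht1 j
    | right j => simpa using ht2 j
  · intro i
    induction i using Fin.addCases with
    | left j => simpa using hf1 j
    | right j => simpa using hf2 j
  · rw [Fin.sum_univ_add]
    simp

lemma smul_mem_cone {X : Set (Fin q → ℝ)} {x : Fin q → ℝ} {c : ℝ} (hc : 0 ≤ c)
    (hx : x ∈ conicalHull q X) : c • x ∈ conicalHull q X := by
  obtain ⟨k, t, f, ht, hf, rfl⟩ := hx
  exact ⟨k, fun i => c * t i, f, fun i => mul_nonneg hc (ht i), hf, by
    rw [Finset.smul_sum]
    exact Finset.sum_congr rfl fun i _ => by simp [smul_smul]⟩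

lemma cone_mono {X Y : Set (Fin q → ℝ)} (h : X ⊆ Y) : conicalHull q X ⊆ conicalHull q Y := by
  rintro x ⟨k, t, f, ht, hf, rfl⟩
  exact ⟨k, t, f, ht, fun i => h (hf i), rfl⟩

lemma convex_cone (X : Set (Fin q → ℝ)) : Convex ℝ (conicalHull q X) := by
  intro x hx y hy a c ha hc _
  exact add_mem_cone (smul_mem_cone ha hx) (smul_mem_cone hc hy)

/-- If `C` contains `0`, is closed under addition and nonneg scaling, and `X ⊆ C`,
then `conicalHull X ⊆ C`. -/
lemma cone_subset {X C : Set (Fin q → ℝ)} (h0 : (0 : Fin q → ℝ) ∈ C)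
    (hadd : ∀ x ∈ C, ∀ y ∈ C, x + y ∈ C)
    (hsmul : ∀ x ∈ C, ∀ c : ℝ, 0 ≤ c → c • x ∈ C)
    (hX : X ⊆ C) : conicalHull q X ⊆ C := by
  rintro x ⟨k, t, f, ht, hf, rfl⟩
  exact Finset.sum_induction _ (· ∈ C) (fun a b ha hb => hadd _ ha _ hb) h0
    (fun i _ => hsmul _ (hX (hf i)) _ (ht i))


open Matrix

def pSet (M : Matrix (Fin m) (Fin q) ℝ) (b : Fin m → ℝ) : Set (Fin q → ℝ) :=
  {x | ∀ i, b i ≤ M.mulVec x i}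

variable (M : Matrix (Fin m) (Fin q) ℝ) (b : Fin m → ℝ)

lemma mv_add_smul (x e : Fin q → ℝ) (t : ℝ) (i : Fin m) :
    M.mulVec (x + t • e) i = M.mulVec x i + t * M.mulVec e i := by
  simp [Matrix.mulVec_add, Matrix.mulVec_smul]

lemma mv_add (x e : Fin q → ℝ) (i : Fin m) :
    M.mulVec (x + e) i = M.mulVec x i + M.mulVec e i := by
  simp [Matrix.mulVec_add]

lemma mv_smul (e : Fin q → ℝ) (t : ℝ) (i : Fin m) :
    M.mulVec (t • e) i = t * M.mulVec e i := by
  simp [Matrix.mulVec_smul]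

lemma convex_pSet : Convex ℝ (pSet M b) := by
  intro x hx y hy a c ha hc hac i
  have := hx i; have := hy i
  have h : M.mulVec (a • x + c • y) i = a * M.mulVec x i + c * M.mulVec y i := by
    simp [Matrix.mulVec_add, Matrix.mulVec_smul]
  rw [h]
  have hb : b i = a * b i + c * b i := by rw [← add_mul, hac, one_mul]
  rw [hb] at *
  calc a * b i + c * b i ≤ a * M.mulVec x i + c * M.mulVec y i :=
      add_le_add (mul_le_mul_of_nonneg_left (hx i) ha) (mul_le_mul_of_nonneg_left (hy i) hc)

lemma add_rec_mem {x d : Fin q → ℝ} (hx : x ∈ pSet M b) (hd : d ∈ pSet M 0) :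
    x + d ∈ pSet M b := fun i => by
  have := hd i
  rw [mv_add]
  simpa using add_le_add (hx i) (hd i)

lemma rec_smul {d : Fin q → ℝ} (hd : d ∈ pSet M 0) {t : ℝ} (ht : 0 ≤ t) :
    t • d ∈ pSet M 0 := fun i => by
  rw [mv_smul]; exact le_trans (by simp) (mul_nonneg ht (by simpa using hd i))

lemma rec_add {d e : Fin q → ℝ} (hd : d ∈ pSet M 0) (he : e ∈ pSet M 0) :
    d + e ∈ pSet M 0 := fun i => by
  rw [mv_add]; simpa using add_nonneg (by simpa using hd i) (by simpa using he i)

lemma rec_zero : (0 : Fin q → ℝ) ∈ pSet M 0 := fun i => by simp [Matrix.mulVec_zero]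

/-- pointedness -/
lemma pointed {p : Fin q → ℝ} (hp : IsVertexOf q (pSet M b) p)
    {d : Fin q → ℝ} (hd : d ∈ pSet M 0) (hd' : -d ∈ pSet M 0) : d = 0 := by
  have h1 : p + d ∈ pSet M b := add_rec_mem M b hp.1 hd
  have h2 : p + (-d) ∈ pSet M b := add_rec_mem M b hp.1 hd'
  have hmid : p = midpoint ℝ (p + d) (p + (-d)) := by
    rw [← sub_eq_add_neg, midpoint_add_sub]
  have heq := hp.2 _ h1 _ h2 hmid
  have hdd : d = -d := add_left_cancel heq
  have h2d : (2:ℝ) • d = 0 := by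
    rw [two_smul]; nth_rewrite 2 [hdd]; simp
  simpa using (smul_eq_zero.mp h2d).resolve_left (by norm_num)

/-- The kernel of the active constraints at `x`, as a submodule. -/
def actKer (x : Fin q → ℝ) : Submodule ℝ (Fin q → ℝ) where
  carrier := {d | ∀ i, M.mulVec x i = b i → M.mulVec d i = 0}
  add_mem' := by
    intro a c ha hc i hi
    rw [mv_add]
    rw [ha i hi, hc i hi, add_zero]
  zero_mem' := by intro i _; simp [Matrix.mulVec_zero]
  smul_mem' := by
    intro c a ha i hi
    rw [mv_smul, ha i hi, mul_zero]

lemma mem_actKer {x d : Fin q → ℝ} :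
    d ∈ actKer M b x ↔ ∀ i, M.mulVec x i = b i → M.mulVec d i = 0 := Iff.rfl

lemma exists_pos_le (f : Fin m → ℝ) (hf : ∀ i, 0 < f i) : ∃ ε : ℝ, 0 < ε ∧ ∀ i, ε ≤ f i := by
  rcases isEmpty_or_nonempty (Fin m) with h | h
  · exact ⟨1, one_pos, fun i => (h.false i).elim⟩
  · refine ⟨Finset.univ.inf' (Finset.univ_nonempty) f, ?_, fun i => Finset.inf'_le _ (by simp)⟩
    rw [Finset.lt_inf'_iff]
    exact fun i _ => hf i

/-- a vertex has trivial active kernel -/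
lemma actKer_eq_bot_of_vertex {p : Fin q → ℝ} (hp : IsVertexOf q (pSet M b) p)
    {d : Fin q → ℝ} (hd : d ∈ actKer M b p) : d = 0 := by
  classical
  obtain ⟨ε, hε, hεle⟩ := exists_pos_le (fun i =>
      if M.mulVec p i = b i then 1 else (M.mulVec p i - b i)/(|M.mulVec d i| + 1))
    (by
      intro i
      by_cases h : M.mulVec p i = b i
      · simp [h]
      · simp only [h, if_false]
        apply div_pos
        · have := hp.1 i; rcases lt_or_eq_of_le this with h' | h'
          · linarith
          · exact absurd h'.symm h
        · positivity)
  have key : ∀ s : ℝ, |s| ≤ ε → p + s • d ∈ pSet M b := by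
    intro s hs i
    rw [mv_add_smul]
    by_cases h : M.mulVec p i = b i
    · rw [hd i h, mul_zero, add_zero, h]
    · have h1 := hεle i
      simp only [h, if_false] at h1
      have h2 : |s * M.mulVec d i| ≤ M.mulVec p i - b i := by
        rw [abs_mul]
        calc |s| * |M.mulVec d i| ≤ ε * (|M.mulVec d i| + 1) := by
              apply mul_le_mul hs (by linarith) (abs_nonneg _) (le_of_lt hε)
        _ ≤ ((M.mulVec p i - b i)/(|M.mulVec d i| + 1)) * (|M.mulVec d i| + 1) := by
              apply mul_le_mul_of_nonneg_right h1; positivity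
        _ = M.mulVec p i - b i := by field_simp
      have := neg_abs_le (s * M.mulVec d i)
      linarith
  have h1 : p + ε • d ∈ pSet M b := key ε (by rw [abs_of_pos hε])
  have h2 : p + (-ε) • d ∈ pSet M b := key (-ε) (by rw [abs_neg, abs_of_pos hε])
  have hmid : p = midpoint ℝ (p + ε • d) (p + (-ε) • d) := by
    rw [neg_smul, ← sub_eq_add_neg, midpoint_add_sub]
  have heq := hp.2 _ h1 _ h2 hmid
  have : ε • d = (-ε) • d := add_left_cancel heq
  have : (2 * ε) • d = 0 := by
    rw [two_mul, add_smul]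
    nth_rewrite 2 [this]
    simp [neg_smul]
  have h2ε : (2 * ε) ≠ 0 := by positivity
  exact (smul_eq_zero.mp this).resolve_left h2ε

/-- trivial active kernel means vertex -/
lemma vertex_of_actKer_eq_bot {p : Fin q → ℝ} (hp : p ∈ pSet M b)
    (h : ∀ d ∈ actKer M b p, d = 0) : IsVertexOf q (pSet M b) p := by
  refine ⟨hp, fun y hy z hz hmid => ?_⟩
  have key : y - z ∈ actKer M b p := by
    intro i hi
    have hmv : M.mulVec p i = (M.mulVec y i + M.mulVec z i) / 2 := by
      rw [hmid, midpoint_eq_smul_add, invOf_eq_inv, mv_smul, mv_add]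
      ring
    have h1 := hy i
    have h2 := hz i
    have hyi : M.mulVec y i = b i := by rw [hi] at hmv; linarith
    have hzi : M.mulVec z i = b i := by rw [hi] at hmv; linarith
    have : M.mulVec (y - z) i = M.mulVec y i - M.mulVec z i := by
      simp [Matrix.mulVec_sub]
    rw [this, hyi, hzi, sub_self]
  exact sub_eq_zero.mp (h _ key)

lemma hit {x e : Fin q → ℝ} (hx : x ∈ pSet M b)
    (he : ∀ i, M.mulVec x i = b i → M.mulVec e i = 0)
    (hneg : ∃ i, M.mulVec e i < 0) :
    ∃ t : ℝ, 0 < t ∧ x + t • e ∈ pSet M b ∧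
      ∃ i₀, M.mulVec e i₀ < 0 ∧ M.mulVec (x + t • e) i₀ = b i₀ := by
  classical
  set T : Finset (Fin m) := Finset.univ.filter (fun i => M.mulVec e i < 0) with hT
  have hTne : T.Nonempty := by
    obtain ⟨i, hi⟩ := hneg
    exact ⟨i, by simp [hT, hi]⟩
  have hslack : ∀ i ∈ T, 0 < M.mulVec x i - b i := by
    intro i hi
    simp only [hT, Finset.mem_filter] at hi
    rcases lt_or_eq_of_le (hx i) with h | h
    · linarith
    · exact absurd (he i h.symm) (ne_of_lt hi.2)
  set ratio : Fin m → ℝ := fun i => (M.mulVec x i - b i) / (-(M.mulVec e i)) with hr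
  set t := T.inf' hTne ratio with htd
  have ht : 0 < t := by
    rw [htd, Finset.lt_inf'_iff]
    intro i hi
    have h1 := hslack i hi
    simp only [hT, Finset.mem_filter] at hi
    exact div_pos h1 (by linarith [hi.2])
  obtain ⟨i₀, hi₀T, hi₀⟩ := Finset.exists_mem_eq_inf' hTne ratio
  have hi₀neg : M.mulVec e i₀ < 0 := by
    simp only [hT, Finset.mem_filter] at hi₀T; exact hi₀T.2
  refine ⟨t, ht, ?_, i₀, hi₀neg, ?_⟩
  · intro i
    rw [mv_add_smul]
    by_cases hie : M.mulVec e i < 0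
    · have hiT : i ∈ T := by simp [hT, hie]
      have : t ≤ ratio i := by rw [htd]; exact Finset.inf'_le _ hiT
      have h2 : t * (-(M.mulVec e i)) ≤ M.mulVec x i - b i := by
        rw [hr] at this
        calc t * (-(M.mulVec e i)) ≤ ((M.mulVec x i - b i) / (-(M.mulVec e i))) * (-(M.mulVec e i)) :=
              mul_le_mul_of_nonneg_right this (by linarith)
        _ = M.mulVec x i - b i := by
              rw [div_mul_cancel₀]
              linarith
      nlinarith
    · push_neg at hie
      nlinarith [hx i, mul_nonneg (le_of_lt ht) hie]
  · rw [mv_add_smul]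
    have h3 : t = (M.mulVec x i₀ - b i₀) / (-(M.mulVec e i₀)) := by
      rw [htd, hi₀]
    rw [h3]
    have hne : (M.mulVec e i₀) ≠ 0 := ne_of_lt hi₀neg
    rw [div_neg, neg_mul, div_mul_cancel₀ _ hne]
    ring

lemma mem_actKer0 {d e : Fin q → ℝ} :
    e ∈ actKer M 0 d ↔ ∀ i, M.mulVec d i = 0 → M.mulVec e i = 0 := by
  simp [mem_actKer]

lemma neg_rec_of {d : Fin q → ℝ} (h : ∀ i, M.mulVec d i = 0) : d ∈ pSet M 0 ∧ -d ∈ pSet M 0 := by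
  constructor <;> intro i <;> simp [h i, Matrix.mulVec_neg]

lemma isFaceOf_eqSet (Q : Fin m → Prop) :
    IsFaceOf q (pSet M b) {x | x ∈ pSet M b ∧ ∀ i, Q i → M.mulVec x i = b i} := by
  constructor
  · intro x hx; exact hx.1
  · intro x hx y hy t ht0 ht1 hmem
    have key : ∀ i, Q i → (M.mulVec x i = b i ∧ M.mulVec y i = b i) := by
      intro i hQ
      have h1 := hmem.2 i hQ
      have hmv : M.mulVec (t • x + (1-t) • y) i
          = t * M.mulVec x i + (1-t) * M.mulVec y i := by
        simp [Matrix.mulVec_add, Matrix.mulVec_smul]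
      rw [hmv] at h1
      have hxb := hx i
      have hyb := hy i
      constructor <;> nlinarith
    exact ⟨⟨hx, fun i hQ => (key i hQ).1⟩, ⟨hy, fun i hQ => (key i hQ).2⟩⟩

lemma exists_ray_root {p₀ d : Fin q → ℝ} (hp₀ : p₀ ∈ pSet M b)
    (hvert : ∃ p, IsVertexOf q (pSet M b) p)
    (hd : d ∈ pSet M 0) (hdn : d ≠ 0) :
    ∃ x : Fin q → ℝ, x ∈ pSet M b ∧ (∀ i, M.mulVec x i = b i → M.mulVec d i = 0) ∧
      actKer M b x ≤ actKer M 0 d := by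
  classical
  obtain ⟨p, hp⟩ := hvert
  have main : ∀ n : ℕ, ∀ x, x ∈ pSet M b → (∀ i, M.mulVec x i = b i → M.mulVec d i = 0) →
      Module.finrank ℝ (actKer M b x) ≤ n →
      ∃ y, y ∈ pSet M b ∧ (∀ i, M.mulVec y i = b i → M.mulVec d i = 0) ∧
        actKer M b y ≤ actKer M 0 d := by
    intro n
    induction n with
    | zero =>
      intro x hx hxd hrk
      have hbot : actKer M b x = ⊥ := Submodule.finrank_eq_zero.mp (Nat.le_zero.mp hrk)
      exact ⟨x, hx, hxd, by rw [hbot]; exact bot_le⟩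
    | succ n ih =>
      intro x hx hxd hrk
      by_cases hstop : actKer M b x ≤ actKer M 0 d
      · exact ⟨x, hx, hxd, hstop⟩
      obtain ⟨e, he, hne⟩ := SetLike.not_le_iff_exists.mp hstop
      clear hstop
      rw [mem_actKer0] at hne
      push_neg at hne
      obtain ⟨i₁, hdi₁, hei₁⟩ := hne
      have step : ∀ e', e' ∈ actKer M b x → ∀ i₁, M.mulVec d i₁ = 0 → M.mulVec e' i₁ < 0 →
          ∃ y, y ∈ pSet M b ∧ (∀ i, M.mulVec y i = b i → M.mulVec d i = 0) ∧
            actKer M b y ≤ actKer M 0 d := by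
        intro e' he' j₁ hdj₁ hej₁
        set S := Finset.univ.filter (fun i => M.mulVec d i ≠ 0) with hS
        have hSne : S.Nonempty := by
          by_contra hS0
          rw [Finset.not_nonempty_iff_eq_empty] at hS0
          have hall : ∀ i, M.mulVec d i = 0 := by
            intro i
            by_contra hi
            have : i ∈ S := by simp [hS, hi]
            simp [hS0] at this
          obtain ⟨h1, h2⟩ := neg_rec_of M hall
          exact hdn (pointed M b hp h1 h2)
        set lam := S.sup' hSne (fun i => |M.mulVec e' i| / M.mulVec d i) with hlam
        set g := e' + lam • d with hg
        have hdpos : ∀ i ∈ S, 0 < M.mulVec d i := by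
          intro i hi
          simp only [hS, Finset.mem_filter] at hi
          rcases lt_or_eq_of_le (by simpa using hd i) with h | h
          · exact h
          · exact absurd h.symm hi.2
        have hmvg : ∀ i, M.mulVec g i = M.mulVec e' i + lam * M.mulVec d i := by
          intro i
          rw [hg, mv_add_smul]
        have hgpos : ∀ i, M.mulVec d i ≠ 0 → 0 ≤ M.mulVec g i := by
          intro i hi
          have hiS : i ∈ S := by simp [hS, hi]
          have h1 : |M.mulVec e' i| / M.mulVec d i ≤ lam := by
            rw [hlam]
            exact Finset.le_sup' (fun i => |M.mulVec e' i| / M.mulVec d i) hiS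
          have h2 := hdpos i hiS
          have h3 : |M.mulVec e' i| ≤ lam * M.mulVec d i := by
            rw [div_le_iff₀ h2] at h1
            linarith
          have := neg_abs_le (M.mulVec e' i)
          rw [hmvg]
          linarith
        have hgact : ∀ i, M.mulVec x i = b i → M.mulVec g i = 0 := by
          intro i hi
          rw [hmvg, he' i hi, hxd i hi, mul_zero, add_zero]
        have hgneg : ∃ i, M.mulVec g i < 0 := by
          refine ⟨j₁, ?_⟩
          rw [hmvg, hdj₁, mul_zero, add_zero]
          exact hej₁
        obtain ⟨t, ht, hxg, i₀, hi₀g, hi₀act⟩ := hit M b hx hgact hgneg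
        set x' := x + t • g with hx'
        have hactx' : ∀ i, M.mulVec x i = b i → M.mulVec x' i = b i := by
          intro i hi
          rw [hx', mv_add_smul, hi, hgact i hi, mul_zero, add_zero]
        have hx'd : ∀ i, M.mulVec x' i = b i → M.mulVec d i = 0 := by
          intro i hi
          by_contra hdi
          have h1 : b i < M.mulVec x i := by
            rcases lt_or_eq_of_le (hx i) with h | h
            · exact h
            · exact absurd (hxd i h.symm) hdi
          have h2 := hgpos i hdi
          have h3 : M.mulVec x' i = M.mulVec x i + t * M.mulVec g i := mv_add_smul M x g t i
          nlinarith
        have hlt : actKer M b x' < actKer M b x := by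
          rw [SetLike.lt_iff_le_and_exists]
          constructor
          · intro u hu i hi
            exact hu i (hactx' i hi)
          · refine ⟨g, hgact, ?_⟩
            intro hgmem
            exact absurd (hgmem i₀ hi₀act) (ne_of_lt hi₀g)
        have hrk' : Module.finrank ℝ (actKer M b x') ≤ n := by
          have := Submodule.finrank_lt_finrank_of_lt hlt
          omega
        exact ih x' hxg hx'd hrk'
      rcases lt_or_gt_of_ne hei₁ with hlt | hgt
      · exact step e he i₁ hdi₁ hlt
      · refine step (-e) (neg_mem he) i₁ hdi₁ ?_
        have : M.mulVec (-e) i₁ = -(M.mulVec e i₁) := by simp [Matrix.mulVec_neg]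
        rw [this]
        linarith
  -- start the induction from `p₀ + d`
  have hx₁ : p₀ + d ∈ pSet M b := add_rec_mem M b hp₀ hd
  have hx₁d : ∀ i, M.mulVec (p₀ + d) i = b i → M.mulVec d i = 0 := by
    intro i hi
    by_contra hdi
    have h1 : 0 < M.mulVec d i := lt_of_le_of_ne (by simpa using hd i) (Ne.symm hdi)
    have h2 := hp₀ i
    have h3 : M.mulVec (p₀ + d) i = M.mulVec p₀ i + M.mulVec d i := mv_add M p₀ d i
    nlinarith
  exact main (Module.finrank ℝ (actKer M b (p₀ + d))) (p₀ + d) hx₁ hx₁d le_rfl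

lemma isExtremeDirOf_of_ker_le_span {d : Fin q → ℝ}
    (hvert : ∃ p, IsVertexOf q (pSet M b) p) (hPne : (pSet M b).Nonempty)
    (hd : d ∈ pSet M 0) (hdn : d ≠ 0)
    (hK : actKer M 0 d ≤ Submodule.span ℝ {d}) :
    IsExtremeDirOf q (pSet M b) d := by
  classical
  obtain ⟨p, hp⟩ := hvert
  obtain ⟨p₀, hp₀⟩ := hPne
  obtain ⟨x, hx, hxd, hxker⟩ := exists_ray_root M b hp₀ ⟨p, hp⟩ hd hdn
  have hxspan : actKer M b x ≤ Submodule.span ℝ {d} := le_trans hxker hK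
  set T := Finset.univ.filter (fun i => 0 < M.mulVec d i) with hT
  have hTne : T.Nonempty := by
    by_contra hT0
    rw [Finset.not_nonempty_iff_eq_empty] at hT0
    have hall : ∀ i, M.mulVec d i = 0 := by
      intro i
      rcases lt_or_eq_of_le (by simpa using hd i) with h | h
      · exfalso
        have : i ∈ T := by simp [hT, h]
        simp [hT0] at this
      · exact h.symm
    obtain ⟨h1, h2⟩ := neg_rec_of M hall
    exact absurd (pointed M b hp h1 h2) hdn
  set t₀ := T.sup' hTne (fun i => (b i - M.mulVec x i) / M.mulVec d i) with ht₀
  obtain ⟨i₁, hi₁T, hi₁⟩ := Finset.exists_mem_eq_sup' hTne (fun i => (b i - M.mulVec x i) / M.mulVec d i)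
  have hi₁d : 0 < M.mulVec d i₁ := by
    simp only [hT, Finset.mem_filter] at hi₁T
    exact hi₁T.2
  set y := x + t₀ • d with hy'
  have hy : y ∈ pSet M b := by
    intro i
    rw [hy', mv_add_smul]
    by_cases hdi : 0 < M.mulVec d i
    · have hiT : i ∈ T := by simp [hT, hdi]
      have h1 : (b i - M.mulVec x i) / M.mulVec d i ≤ t₀ := by
        rw [ht₀]
        exact Finset.le_sup' (fun i => (b i - M.mulVec x i) / M.mulVec d i) hiT
      rw [div_le_iff₀ hdi] at h1
      linarith
    · have h0 : M.mulVec d i = 0 :=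
        le_antisymm (not_lt.mp hdi) (by simpa using hd i)
      rw [h0, mul_zero, add_zero]
      exact hx i
  have hray : {z | ∃ t : ℝ, 0 ≤ t ∧ z = y + t • d}
      = {z | z ∈ pSet M b ∧ ∀ i, M.mulVec x i = b i → M.mulVec z i = b i} := by
    ext z
    constructor
    · rintro ⟨t, ht, rfl⟩
      refine ⟨add_rec_mem M b hy (rec_smul M hd ht), ?_⟩
      intro i hi
      have hdi := hxd i hi
      have : y + t • d = x + (t₀ + t) • d := by
        rw [hy', add_smul, add_assoc]
      rw [this, mv_add_smul, hdi, mul_zero, add_zero, hi]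
    · rintro ⟨hzP, hzact⟩
      have hzx : z - x ∈ actKer M b x := by
        intro i hi
        have : M.mulVec (z - x) i = M.mulVec z i - M.mulVec x i := by
          simp [Matrix.mulVec_sub]
        rw [this, hzact i hi, hi, sub_self]
      obtain ⟨c, hc⟩ := Submodule.mem_span_singleton.mp (hxspan hzx)
      have hzc : z = x + c • d := by
        rw [hc]
        abel
      have hct₀ : t₀ ≤ c := by
        have h1 := hzP i₁
        rw [hzc, mv_add_smul] at h1
        have h2 : (b i₁ - M.mulVec x i₁) / M.mulVec d i₁ ≤ c := by
          rw [div_le_iff₀ hi₁d]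
          linarith
        rw [ht₀, hi₁]
        exact h2
      refine ⟨c - t₀, by linarith, ?_⟩
      rw [hzc, hy', add_assoc, ← add_smul, show t₀ + (c - t₀) = c by ring]
  refine ⟨hdn, y, hy, ?_⟩
  rw [hray]
  exact isFaceOf_eqSet M b (fun i => M.mulVec x i = b i)


lemma exists_pos_row {p d : Fin q → ℝ} (hp : IsVertexOf q (pSet M b) p)
    (hd : d ∈ pSet M 0) (hdn : d ≠ 0) : ∃ i, 0 < M.mulVec d i := by
  by_contra h
  push_neg at h
  have hall : ∀ i, M.mulVec d i = 0 := fun i =>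
    le_antisymm (h i) (by simpa using hd i)
  obtain ⟨h1, h2⟩ := neg_rec_of M hall
  exact hdn (pointed M b hp h1 h2)

lemma gap {p d e : Fin q → ℝ} (hp : IsVertexOf q (pSet M b) p)
    (hd : d ∈ pSet M 0) (hdn : d ≠ 0)
    (he : ∀ i, M.mulVec d i = 0 → M.mulVec e i = 0)
    (hes : e ∉ Submodule.span ℝ {d}) :
    ∃ g : Fin q → ℝ, (∀ i, M.mulVec d i = 0 → M.mulVec g i = 0) ∧
      (∃ i, M.mulVec g i < 0) ∧ (∃ i, 0 < M.mulVec g i) := by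
  classical
  set S := Finset.univ.filter (fun i => 0 < M.mulVec d i) with hS
  have hSne : S.Nonempty := by
    obtain ⟨i, hi⟩ := exists_pos_row M b hp hd hdn
    exact ⟨i, by simp [hS, hi]⟩
  have hdpos : ∀ i ∈ S, 0 < M.mulVec d i := fun i hi => by
    simpa [hS] using (Finset.mem_filter.mp hi).2
  set r : Fin m → ℝ := fun i => M.mulVec e i / M.mulVec d i with hr
  set lmin := S.inf' hSne r with hlmin
  set lmax := S.sup' hSne r with hlmax
  obtain ⟨imin, himinS, himin⟩ := Finset.exists_mem_eq_inf' hSne r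
  obtain ⟨imax, himaxS, himax⟩ := Finset.exists_mem_eq_sup' hSne r
  by_cases hcmp : lmin < lmax
  · set lam := (lmin + lmax) / 2 with hlam
    refine ⟨e - lam • d, ?_, ⟨imin, ?_⟩, ⟨imax, ?_⟩⟩
    · intro i hi
      have : M.mulVec (e - lam • d) i = M.mulVec e i - lam * M.mulVec d i := by
        simp [Matrix.mulVec_sub, Matrix.mulVec_smul]
      rw [this, he i hi, hi, mul_zero, sub_zero]
    · have hdi := hdpos imin himinS
      have : M.mulVec (e - lam • d) imin = M.mulVec e imin - lam * M.mulVec d imin := by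
        simp [Matrix.mulVec_sub, Matrix.mulVec_smul]
      rw [this]
      have h1 : r imin < lam := by rw [← himin, ← hlmin]; rw [hlam]; linarith
      rw [hr] at h1
      simp only [div_lt_iff₀ hdi] at h1
      linarith
    · have hdi := hdpos imax himaxS
      have : M.mulVec (e - lam • d) imax = M.mulVec e imax - lam * M.mulVec d imax := by
        simp [Matrix.mulVec_sub, Matrix.mulVec_smul]
      rw [this]
      have h1 : lam < r imax := by rw [← himax, ← hlmax]; rw [hlam]; linarith
      rw [hr] at h1
      simp only [lt_div_iff₀ hdi] at h1
      linarith
  · exfalso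
    -- all ratios are equal, so e - lmin • d is in the lineality, hence zero
    have hreq : ∀ i ∈ S, r i = lmin := by
      intro i hi
      have h1 : lmin ≤ r i := by rw [hlmin]; exact Finset.inf'_le _ hi
      have h2 : r i ≤ lmax := by rw [hlmax]; exact Finset.le_sup' _ hi
      have h3 : lmax ≤ lmin := not_lt.mp hcmp
      linarith
    have hall : ∀ i, M.mulVec (e - lmin • d) i = 0 := by
      intro i
      have hmv : M.mulVec (e - lmin • d) i = M.mulVec e i - lmin * M.mulVec d i := by
        simp [Matrix.mulVec_sub, Matrix.mulVec_smul]
      rw [hmv]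
      by_cases hi : i ∈ S
      · have hdi := hdpos i hi
        have := hreq i hi
        rw [hr] at this
        simp only at this
        rw [div_eq_iff (ne_of_gt hdi)] at this
        linarith
      · have hdi : M.mulVec d i = 0 := by
          have : ¬ 0 < M.mulVec d i := by
            intro h; exact hi (by simp [hS, h])
          exact le_antisymm (not_lt.mp this) (by simpa using hd i)
        rw [he i hdi, hdi, mul_zero, sub_zero]
    obtain ⟨h1, h2⟩ := neg_rec_of M hall
    have := pointed M b hp h1 h2
    apply hes
    rw [sub_eq_zero] at this
    exact Submodule.mem_span_singleton.mpr ⟨lmin, this.symm⟩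

/-- Every recession direction is a nonnegative combination of the representatives in `D`. -/
theorem rec_mem_coneD
    (hvert : ∃ p, IsVertexOf q (pSet M b) p) (hPne : (pSet M b).Nonempty)
    (D : Finset (Fin q → ℝ))
    (hDrep : ∀ d, IsExtremeDirOf q (pSet M b) d →
      ∃! d' : Fin q → ℝ, d' ∈ D ∧ ∃ t : ℝ, 0 < t ∧ d = t • d') :
    ∀ d ∈ pSet M 0, d ∈ conicalHull q (D : Set (Fin q → ℝ)) := by
  classical
  obtain ⟨p, hp⟩ := hvert
  have main : ∀ n : ℕ, ∀ d ∈ pSet M 0, Module.finrank ℝ (actKer M 0 d) ≤ n →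
      d ∈ conicalHull q (D : Set (Fin q → ℝ)) := by
    intro n
    induction n with
    | zero =>
      intro d hd hrk
      have hbot : actKer M 0 d = ⊥ := Submodule.finrank_eq_zero.mp (Nat.le_zero.mp hrk)
      have hdmem : d ∈ actKer M 0 d := by
        rw [mem_actKer0]
        exact fun i hi => hi
      rw [hbot] at hdmem
      rw [Submodule.mem_bot] at hdmem
      rw [hdmem]
      exact zero_mem_cone _
    | succ n ih =>
      intro d hd hrk
      by_cases hd0 : d = 0
      · rw [hd0]; exact zero_mem_cone _
      by_cases hker : actKer M 0 d ≤ Submodule.span ℝ {d}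
      · have hext := isExtremeDirOf_of_ker_le_span M b ⟨p, hp⟩ hPne hd hd0 hker
        obtain ⟨d', ⟨hd'D, t, ht, hdt⟩, _⟩ := hDrep d hext
        rw [hdt]
        exact single_mem_cone (Finset.mem_coe.mpr hd'D) (le_of_lt ht)
      obtain ⟨e, heker, hespan⟩ := SetLike.not_le_iff_exists.mp hker
      clear hker
      rw [mem_actKer0] at heker
      obtain ⟨g, hg0, hgneg, hgpos⟩ := gap M b hp hd hd0 heker hespan
      -- move in direction g
      have hgact : ∀ i, M.mulVec d i = (0 : Fin m → ℝ) i → M.mulVec g i = 0 := by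
        intro i hi
        exact hg0 i (by simpa using hi)
      obtain ⟨tp, htp, hdp, i₀, hi₀g, hi₀act⟩ := hit M 0 hd hgact hgneg
      -- move in direction -g
      have hgact' : ∀ i, M.mulVec d i = (0 : Fin m → ℝ) i → M.mulVec (-g) i = 0 := by
        intro i hi
        rw [Matrix.mulVec_neg]
        simp [hg0 i (by simpa using hi)]
      have hgneg' : ∃ i, M.mulVec (-g) i < 0 := by
        obtain ⟨i, hi⟩ := hgpos
        exact ⟨i, by rw [Matrix.mulVec_neg]; simpa using hi⟩
      obtain ⟨tm, htm, hdm, i₁, hi₁g, hi₁act⟩ := hit M 0 hd hgact' hgneg'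
      -- finrank decreases
      have hdec : ∀ (t' : ℝ) (g' : Fin q → ℝ), 0 < t' →
          (∀ i, M.mulVec d i = 0 → M.mulVec g' i = 0) →
          (∀ i₂, M.mulVec g' i₂ < 0 → M.mulVec (d + t' • g') i₂ = (0:Fin m → ℝ) i₂ →
            actKer M 0 (d + t' • g') < actKer M 0 d) := by
        intro t' g' ht' hg'0 i₂ hi₂ hi₂act
        rw [SetLike.lt_iff_le_and_exists]
        constructor
        · intro u hu
          rw [mem_actKer0] at hu ⊢
          intro i hi
          apply hu i
          have : M.mulVec (d + t' • g') i = M.mulVec d i + t' * M.mulVec g' i :=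
            mv_add_smul M d g' t' i
          simp only [this, hi, hg'0 i hi, mul_zero, add_zero]
        · refine ⟨g', ?_, ?_⟩
          · rw [mem_actKer0]; exact hg'0
          · rw [mem_actKer0]
            intro hmem
            exact absurd (hmem i₂ (by simpa using hi₂act)) (ne_of_lt hi₂)
      have hltp := hdec tp g htp hg0 i₀ hi₀g hi₀act
      have hltm := hdec tm (-g) htm
        (fun i hi => by rw [Matrix.mulVec_neg]; simp [hg0 i hi]) i₁ hi₁g hi₁act
      have hrkp : Module.finrank ℝ (actKer M 0 (d + tp • g)) ≤ n := by
        have := Submodule.finrank_lt_finrank_of_lt hltp; omega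
      have hrkm : Module.finrank ℝ (actKer M 0 (d + tm • (-g))) ≤ n := by
        have := Submodule.finrank_lt_finrank_of_lt hltm; omega
      have hmp := ih _ hdp hrkp
      have hmm := ih _ hdm hrkm
      -- convex-conic combination recovers d
      have hs : 0 < tp + tm := by linarith
      have key : d = (tm / (tp + tm)) • (d + tp • g) + (tp / (tp + tm)) • (d + tm • (-g)) := by
        have h1 : (tm / (tp + tm)) + (tp / (tp + tm)) = 1 := by
          field_simp
          ring
        have h2 : (tm / (tp + tm)) * tp - (tp / (tp + tm)) * tm = 0 := by
          field_simp
          ring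
        ext j
        simp only [Pi.add_apply, Pi.smul_apply, smul_eq_mul, Pi.neg_apply]
        linear_combination (-(d j)) * h1 + (-(g j)) * h2
      rw [key]
      exact add_mem_cone
        (smul_mem_cone (div_nonneg (le_of_lt htm) (le_of_lt hs)) hmp)
        (smul_mem_cone (div_nonneg (le_of_lt htp) (le_of_lt hs)) hmm)
  intro d hd
  exact main (Module.finrank ℝ (actKer M 0 d)) d hd le_rfl


/-- Minkowski resolution: every point of a pointed polyhedron is the sum of a convex
combination of vertices and a conic combination of the extreme-ray representatives. -/
theorem mem_decomp
    (hvert : ∃ p, IsVertexOf q (pSet M b) p) (hPne : (pSet M b).Nonempty)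
    (D : Finset (Fin q → ℝ))
    (hDrep : ∀ d, IsExtremeDirOf q (pSet M b) d →
      ∃! d' : Fin q → ℝ, d' ∈ D ∧ ∃ t : ℝ, 0 < t ∧ d = t • d') :
    ∀ x ∈ pSet M b,
      x ∈ convexHull ℝ {p | IsVertexOf q (pSet M b) p} + conicalHull q (D : Set (Fin q → ℝ)) := by
  classical
  obtain ⟨p, hp⟩ := hvert
  set S := convexHull ℝ {p | IsVertexOf q (pSet M b) p} + conicalHull q (D : Set (Fin q → ℝ))
    with hSdef
  have hvmem : ∀ x, IsVertexOf q (pSet M b) x → x ∈ S := by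
    intro x hx
    rw [hSdef, show x = x + 0 by rw [add_zero]]
    exact Set.add_mem_add (subset_convexHull ℝ _ hx) (zero_mem_cone _)
  have hSconv : Convex ℝ S := Convex.add (convex_convexHull ℝ _) (convex_cone _)
  have main : ∀ n : ℕ, ∀ x ∈ pSet M b, Module.finrank ℝ (actKer M b x) ≤ n → x ∈ S := by
    intro n
    induction n with
    | zero =>
      intro x hx hrk
      have hbot : actKer M b x = ⊥ := Submodule.finrank_eq_zero.mp (Nat.le_zero.mp hrk)
      refine hvmem x (vertex_of_actKer_eq_bot M b hx ?_)
      intro u hu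
      rw [hbot] at hu
      simpa using hu
    | succ n ih =>
      intro x hx hrk
      by_cases hbot : ∀ u ∈ actKer M b x, u = 0
      · exact hvmem x (vertex_of_actKer_eq_bot M b hx hbot)
      push_neg at hbot
      obtain ⟨e, heker, hene⟩ := hbot
      -- a "one-sided" step: move along `e` until a constraint becomes active
      have step : ∀ e' : Fin q → ℝ, e' ∈ actKer M b x → (∃ i, M.mulVec e' i < 0) →
          ∃ t' : ℝ, 0 < t' ∧ (x + t' • e') ∈ pSet M b ∧
            Module.finrank ℝ (actKer M b (x + t' • e')) ≤ n := by
        intro e' he' hneg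
        obtain ⟨t', ht', hx', i₀, hi₀e, hi₀act⟩ := hit M b hx he' hneg
        have hlt : actKer M b (x + t' • e') < actKer M b x := by
          rw [SetLike.lt_iff_le_and_exists]
          constructor
          · intro u hu i hi
            apply hu i
            rw [mv_add_smul, hi, he' i hi, mul_zero, add_zero]
          · refine ⟨e', he', fun hmem => absurd (hmem i₀ hi₀act) (ne_of_lt hi₀e)⟩
        have := Submodule.finrank_lt_finrank_of_lt hlt
        exact ⟨t', ht', hx', by omega⟩
      by_cases hcase1 : ∃ i, M.mulVec e i < 0
      · by_cases hcase2 : ∃ i, 0 < M.mulVec e i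
        · -- both directions hit a constraint: convex combination
          obtain ⟨tp, htp, hxp, hrkp⟩ := step e heker hcase1
          have hneg' : ∃ i, M.mulVec (-e) i < 0 := by
            obtain ⟨i, hi⟩ := hcase2
            exact ⟨i, by rw [Matrix.mulVec_neg]; simpa using hi⟩
          obtain ⟨tm, htm, hxm, hrkm⟩ := step (-e) (neg_mem heker) hneg'
          have hmp := ih _ hxp hrkp
          have hmm := ih _ hxm hrkm
          have hs : 0 < tp + tm := by linarith
          have h1 : (tm / (tp + tm)) + (tp / (tp + tm)) = 1 := by
            field_simp
            ring
          have h2 : (tm / (tp + tm)) * tp - (tp / (tp + tm)) * tm = 0 := by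
            field_simp
            ring
          have key : x = (tm / (tp + tm)) • (x + tp • e) + (tp / (tp + tm)) • (x + tm • (-e)) := by
            ext j
            simp only [Pi.add_apply, Pi.smul_apply, smul_eq_mul, Pi.neg_apply]
            linear_combination (-(x j)) * h1 + (-(e j)) * h2
          rw [key]
          exact hSconv hmp hmm (div_nonneg (le_of_lt htm) (le_of_lt hs))
            (div_nonneg (le_of_lt htp) (le_of_lt hs)) h1
        · -- `-e` is a recession direction
          push_neg at hcase2
          have herec : (-e) ∈ pSet M 0 := by
            intro i
            rw [Matrix.mulVec_neg]
            simpa using hcase2 i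
          obtain ⟨tp, htp, hxp, hrkp⟩ := step e heker hcase1
          obtain ⟨c, hc, r, hr, hcr⟩ := ih _ hxp hrkp
          have hco : tp • (-e) ∈ conicalHull q (D : Set (Fin q → ℝ)) :=
            smul_mem_cone (le_of_lt htp)
              (rec_mem_coneD M b ⟨p, hp⟩ hPne D hDrep (-e) herec)
          have key : x = c + (r + tp • (-e)) := by
            have : x = (x + tp • e) + tp • (-e) := by
              rw [smul_neg, add_assoc]
              simp
            rw [this, ← hcr]
            exact add_assoc _ _ _
          rw [key]
          exact Set.add_mem_add hc (add_mem_cone hr hco)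
      · by_cases hcase2 : ∃ i, 0 < M.mulVec e i
        · -- `e` is a recession direction
          push_neg at hcase1
          have herec : e ∈ pSet M 0 := by
            intro i
            simpa using hcase1 i
          have hneg' : ∃ i, M.mulVec (-e) i < 0 := by
            obtain ⟨i, hi⟩ := hcase2
            exact ⟨i, by rw [Matrix.mulVec_neg]; simpa using hi⟩
          obtain ⟨tm, htm, hxm, hrkm⟩ := step (-e) (neg_mem heker) hneg'
          obtain ⟨c, hc, r, hr, hcr⟩ := ih _ hxm hrkm
          have hco : tm • e ∈ conicalHull q (D : Set (Fin q → ℝ)) :=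
            smul_mem_cone (le_of_lt htm)
              (rec_mem_coneD M b ⟨p, hp⟩ hPne D hDrep e herec)
          have key : x = c + (r + tm • e) := by
            have : x = (x + tm • (-e)) + tm • e := by
              rw [smul_neg, add_assoc]
              simp
            rw [this, ← hcr]
            exact add_assoc _ _ _
          rw [key]
          exact Set.add_mem_add hc (add_mem_cone hr hco)
        · -- e is in the lineality space: contradiction with pointedness
          exfalso
          push_neg at hcase1 hcase2
          have h1 : e ∈ pSet M 0 := fun i => by simpa using hcase1 i
          have h2 : (-e) ∈ pSet M 0 := fun i => by
            rw [Matrix.mulVec_neg]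
            simp only [Pi.neg_apply, Pi.zero_apply]
            have := hcase2 i
            simpa using le_of_not_gt (by simpa using hcase2 i)
          exact hene (pointed M b hp h1 h2)
  intro x hx
  exact main (Module.finrank ℝ (actKer M b x)) x hx le_rfl

/-- The set of vertices is finite. -/
lemma vertexSet_finite : {p : Fin q → ℝ | IsVertexOf q (pSet M b) p}.Finite := by
  classical
  have key : Set.InjOn (fun p => Finset.univ.filter (fun i => M.mulVec p i = b i))
      {p : Fin q → ℝ | IsVertexOf q (pSet M b) p} := by
    intro p₁ hp₁ p₂ hp₂ heq
    have hsub : p₁ - p₂ ∈ actKer M b p₁ := by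
      intro i hi
      have hi2 : M.mulVec p₂ i = b i := by
        have heqb : Finset.univ.filter (fun i => M.mulVec p₁ i = b i)
            = Finset.univ.filter (fun i => M.mulVec p₂ i = b i) := heq
        have h1 : i ∈ Finset.univ.filter (fun i => M.mulVec p₁ i = b i) := by simp [hi]
        rw [heqb] at h1
        simpa using h1
      have : M.mulVec (p₁ - p₂) i = M.mulVec p₁ i - M.mulVec p₂ i := by
        simp [Matrix.mulVec_sub]
      rw [this, hi, hi2, sub_self]
    have := actKer_eq_bot_of_vertex M b hp₁ hsub
    exact sub_eq_zero.mp this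
  have : Set.Finite (Set.range (fun s : Finset (Fin m) => s)) := Set.finite_range _
  exact Set.Finite.of_finite_image (Set.toFinite _) key

/-- A vertex is an extreme point. -/
lemma vertex_mem_extremePoints {p : Fin q → ℝ} {P : Set (Fin q → ℝ)} (hconv : Convex ℝ P)
    (hp : IsVertexOf q P p) : p ∈ P.extremePoints ℝ := by
  refine ⟨hp.1, fun x₁ hx₁ x₂ hx₂ hseg => ?_⟩
  obtain ⟨a, c, ha, hc, hac, habc⟩ := hseg
  by_cases hx12 : x₁ = x₂
  · subst hx12
    have : p = x₁ := by
      rw [← habc, ← add_smul, hac, one_smul]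
    exact this.symm
  · exfalso
    set s := min a c with hs
    have hs0 : 0 < s := lt_min ha hc
    have hsa : s ≤ a := min_le_left _ _
    have hsc : s ≤ c := min_le_right _ _
    have hmem1 : p + s • (x₁ - x₂) ∈ P := by
      have : p + s • (x₁ - x₂) = (a + s) • x₁ + (c - s) • x₂ := by
        rw [← habc]
        ext j
        simp only [Pi.add_apply, Pi.smul_apply, Pi.sub_apply, smul_eq_mul]
        ring
      rw [this]
      exact hconv hx₁ hx₂ (by linarith) (by linarith) (by linarith)
    have hmem2 : p - s • (x₁ - x₂) ∈ P := by
      have : p - s • (x₁ - x₂) = (a - s) • x₁ + (c + s) • x₂ := by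
        rw [← habc]
        ext j
        simp only [Pi.sub_apply, Pi.add_apply, Pi.smul_apply, smul_eq_mul]
        ring
      rw [this]
      exact hconv hx₁ hx₂ (by linarith) (by linarith) (by linarith)
    have hmid : p = midpoint ℝ (p + s • (x₁ - x₂)) (p - s • (x₁ - x₂)) := by
      rw [midpoint_add_sub]
    have := hp.2 _ hmem1 _ hmem2 hmid
    have h0 : s • (x₁ - x₂) = 0 := by
      have h1 := add_left_cancel (a := p) (b := s • (x₁ - x₂)) (c := -(s • (x₁ - x₂))) ?_
      · have h2 : (2:ℝ) • (s • (x₁ - x₂)) = 0 := by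
          rw [two_smul]
          nth_rewrite 2 [h1]
          simp
        simpa using (smul_eq_zero.mp h2).resolve_left (by norm_num)
      · rw [← sub_eq_add_neg]
        exact this
    have := (smul_eq_zero.mp h0).resolve_left (ne_of_gt hs0)
    exact hx12 (sub_eq_zero.mp this)

/-- An extreme point of `P` lying in a subset `A ⊆ P` is an extreme point of `A`. -/
lemma extremePoints_mono' {P A : Set (Fin q → ℝ)} {p : Fin q → ℝ}
    (hA : A ⊆ P) (hpA : p ∈ A) (hp : p ∈ P.extremePoints ℝ) : p ∈ A.extremePoints ℝ :=
  ⟨hpA, fun x₁ hx₁ x₂ hx₂ hseg => hp.2 (hA hx₁) (hA hx₂) hseg⟩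


/-- An extreme direction is a recession direction. -/
lemma extremeDir_mem_rec {d : Fin q → ℝ} (hd : IsExtremeDirOf q (pSet M b) d) :
    d ∈ pSet M 0 := by
  obtain ⟨hdne, y, hy, hF⟩ := hd
  have hray : ∀ t : ℝ, 0 ≤ t → y + t • d ∈ pSet M b := by
    intro t ht
    exact hF.1 ⟨t, ht, rfl⟩
  intro i
  by_contra hneg
  push_neg at hneg
  have hdi : M.mulVec d i < 0 := by simpa using hneg
  set t := (M.mulVec y i - b i + 1) / (-(M.mulVec d i)) with htdef
  have ht : 0 ≤ t := by
    apply div_nonneg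
    · have := hy i; linarith
    · linarith
  have hmem := hray t ht i
  rw [mv_add_smul] at hmem
  have htd : t * M.mulVec d i = -(M.mulVec y i - b i + 1) := by
    rw [htdef, div_mul_eq_mul_div, mul_div_assoc, div_neg, div_self (ne_of_lt hdi)]
    ring
  rw [htd] at hmem
  linarith

lemma coneD_sub_rec {X : Set (Fin q → ℝ)}
    (hX : ∀ d ∈ X, d ∈ pSet M 0) : conicalHull q X ⊆ pSet M 0 :=
  cone_subset (rec_zero M) (fun x hx y hy => rec_add M hx hy)
    (fun x hx c hc => rec_smul M hx hc) hX

end VRep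


open VRep

/-- For a nonempty polyhedron `P` with a vertex, the vertices together with
representatives of the extreme rays form an irredundant V-representation:
`P = conv V + cone D`, and no generator can be removed. -/
theorem irredundant_V_representation (q : ℕ) (P : Set (Fin q → ℝ))
    (hPpoly : ∃ (m : ℕ) (M : Matrix (Fin m) (Fin q) ℝ) (b : Fin m → ℝ),
      P = {x | ∀ i, b i ≤ M.mulVec x i})
    (hPne : P.Nonempty)
    (hvert : ∃ p, IsVertexOf q P p)
    (V : Set (Fin q → ℝ)) (hV : V = {p | IsVertexOf q P p})
    (D : Finset (Fin q → ℝ))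
    (hD : ∀ d ∈ D, IsExtremeDirOf q P d)
    (hDrep : ∀ d, IsExtremeDirOf q P d →
      ∃! d' : Fin q → ℝ, d' ∈ D ∧ ∃ t : ℝ, 0 < t ∧ d = t • d') :
    P = convexHull ℝ V + conicalHull q (D : Set (Fin q → ℝ)) ∧
    (∀ v ∈ V,
      convexHull ℝ (V \ {v}) + conicalHull q (D : Set (Fin q → ℝ)) ≠ P) ∧
    (∀ d ∈ D,
      convexHull ℝ V + conicalHull q ((D : Set (Fin q → ℝ)) \ {d}) ≠ P) := by
  classical
  obtain ⟨m, M, b, rfl⟩ := hPpoly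
  have hPeq : {x | ∀ i, b i ≤ M.mulVec x i} = pSet M b := rfl
  rw [hPeq] at *
  obtain ⟨p, hp⟩ := hvert
  -- basic containments
  have hVP : V ⊆ pSet M b := by
    rw [hV]; exact fun v hv => hv.1
  have hconvVP : convexHull ℝ V ⊆ pSet M b := convexHull_min hVP (convex_pSet M b)
  have hDrec : ∀ d ∈ (D : Set (Fin q → ℝ)), d ∈ pSet M 0 := by
    intro d hd'
    exact extremeDir_mem_rec M b (hD d hd')
  have hconeD : conicalHull q (D : Set (Fin q → ℝ)) ⊆ pSet M 0 := coneD_sub_rec M hDrec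
  -- Part 1
  have part1 : pSet M b = convexHull ℝ V + conicalHull q (D : Set (Fin q → ℝ)) := by
    apply Set.eq_of_subset_of_subset
    · intro x hx
      have := mem_decomp M b ⟨p, hp⟩ hPne D hDrep x hx
      rw [hV]
      exact this
    · intro z hz
      obtain ⟨c, hc, r, hr, rfl⟩ := Set.mem_add.mp hz
      exact add_rec_mem M b (hconvVP hc) (hconeD hr)
  refine ⟨part1, ?_, ?_⟩
  -- Part 2: no vertex can be removed
  · intro v hv heq
    have hvert_v : IsVertexOf q (pSet M b) v := by rw [hV] at hv; exact hv
    have hvP : v ∈ pSet M b := hvert_v.1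
    rw [← heq] at hvP
    obtain ⟨c, hc, r, hr, hcr⟩ := Set.mem_add.mp hvP
    have hcP : c ∈ pSet M b := convexHull_min (fun w hw => hVP hw.1) (convex_pSet M b) hc
    have hrrec : r ∈ pSet M 0 := hconeD hr
    have hc2P : c + (2:ℝ) • r ∈ pSet M b := add_rec_mem M b hcP (rec_smul M hrrec (by norm_num))
    have hmid : v = midpoint ℝ c (c + (2:ℝ) • r) := by
      rw [midpoint_eq_smul_add, invOf_eq_inv, ← hcr]
      ext j
      simp only [Pi.smul_apply, Pi.add_apply, smul_eq_mul]
      ring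
    have hceq := hvert_v.2 c hcP _ hc2P hmid
    have hr0 : r = 0 := by
      have h2 : (2:ℝ) • r = 0 := by
        have := hceq
        nth_rewrite 1 [show c = c + 0 by rw [add_zero]] at this
        exact (add_left_cancel this).symm
      simpa using (smul_eq_zero.mp h2).resolve_left (by norm_num)
    have hvc : v = c := by rw [← hcr, hr0, add_zero]
    -- v is an extreme point of conv (V \ {v}), hence in V \ {v}: contradiction
    have hvx : v ∈ (pSet M b).extremePoints ℝ :=
      vertex_mem_extremePoints (convex_pSet M b) hvert_v
    have hsub : convexHull ℝ (V \ {v}) ⊆ pSet M b :=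
      convexHull_min (fun w hw => hVP hw.1) (convex_pSet M b)
    have hvA : v ∈ convexHull ℝ (V \ {v}) := by nth_rewrite 2 [hvc]; exact hc
    have := extremePoints_mono' hsub hvA hvx
    have hvmem := extremePoints_convexHull_subset this
    exact hvmem.2 rfl
  -- Part 3: no extreme-ray representative can be removed
  · intro d hd heq
    obtain ⟨hdne, y, hyP, hFace⟩ := hD d hd
    have hdrec : d ∈ pSet M 0 := extremeDir_mem_rec M b (hD d hd)
    set F := {z | ∃ t : ℝ, 0 ≤ t ∧ z = y + t • d} with hFdef
    have hD'rec : ∀ e ∈ ((D : Set (Fin q → ℝ)) \ {d}), e ∈ pSet M 0 :=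
      fun e he => hDrec e he.1
    have hconeD' : conicalHull q ((D : Set (Fin q → ℝ)) \ {d}) ⊆ pSet M 0 :=
      coneD_sub_rec M hD'rec
    -- the whole ray lies in conv V
    have hray_conv : ∀ t : ℝ, 0 ≤ t → y + t • d ∈ convexHull ℝ V := by
      intro t ht
      have hzF : y + t • d ∈ F := ⟨t, ht, rfl⟩
      have hzP : y + t • d ∈ pSet M b := hFace.1 hzF
      rw [← heq] at hzP
      obtain ⟨c, hc, r, hr, hcr⟩ := Set.mem_add.mp hzP
      have hcP : c ∈ pSet M b := hconvVP hc
      have hrrec : r ∈ pSet M 0 := hconeD' hr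
      have hc2P : c + (2:ℝ) • r ∈ pSet M b := add_rec_mem M b hcP (rec_smul M hrrec (by norm_num))
      have hzmid : (1/2 : ℝ) • c + (1 - 1/2 : ℝ) • (c + (2:ℝ) • r) ∈ F := by
        have : (1/2 : ℝ) • c + (1 - 1/2 : ℝ) • (c + (2:ℝ) • r) = y + t • d := by
          rw [← hcr]
          ext j
          simp only [Pi.add_apply, Pi.smul_apply, smul_eq_mul]
          ring
        rw [this]
        exact hzF
      obtain ⟨hcF, hc2F⟩ := hFace.2 c hcP _ hc2P (1/2) (by norm_num) (by norm_num) hzmid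
      obtain ⟨s, hs, hcs⟩ := hcF
      obtain ⟨s', hs', hcs'⟩ := hc2F
      have h2r : (2:ℝ) • r = (s' - s) • d := by
        have : c + (2:ℝ) • r - c = (y + s' • d) - (y + s • d) := by rw [← hcs, ← hcs']
        have h' : (2:ℝ) • r = (s' - s) • d := by
          rw [sub_smul]
          rw [show c + (2:ℝ) • r - c = (2:ℝ) • r by abel] at this
          rw [show (y + s' • d) - (y + s • d) = s' • d - s • d by abel] at this
          exact this
        exact h'
      rcases lt_trichotomy s' s with hss | hss | hss
      · -- -d would be a recession direction: contradiction with pointedness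
        exfalso
        set u := s - s' with hu
        have hu0 : 0 < u := by rw [hu]; linarith
        have hnd : -d = (2/u) • r := by
          ext j
          have hj := congrFun h2r j
          simp only [Pi.smul_apply, smul_eq_mul, Pi.sub_apply, Pi.neg_apply] at hj ⊢
          rw [show (2/u * r j) = (2 * r j)/u by ring, eq_comm, div_eq_iff (ne_of_gt hu0)]
          rw [hu]
          linarith [hj]
        have hndrec : -d ∈ pSet M 0 := by
          rw [hnd]
          exact rec_smul M hrrec (by positivity)
        exact hdne (pointed M b hp hdrec hndrec)
      · -- r = 0: the point is c ∈ conv V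
        have hr0 : r = 0 := by
          have : (2:ℝ) • r = 0 := by rw [h2r, hss, sub_self, zero_smul]
          simpa using (smul_eq_zero.mp this).resolve_left (by norm_num)
        rw [← hcr, hr0, add_zero]
        exact hc
      · -- d itself would be in cone (D \ {d}): contradiction
        exfalso
        have hdcone : d ∈ conicalHull q ((D : Set (Fin q → ℝ)) \ {d}) := by
          have : d = (2/(s' - s)) • r := by
            ext j
            have hj := congrFun h2r j
            simp only [Pi.smul_apply, smul_eq_mul, Pi.sub_apply] at hj ⊢
            rw [show (2/(s'-s) * r j) = (2 * r j)/(s'-s) by ring, eq_comm,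
              div_eq_iff (by linarith : s' - s ≠ 0)]
            linarith [hj]
          have hmem : (2/(s' - s)) • r ∈ conicalHull q ((D : Set (Fin q → ℝ)) \ {d}) :=
            smul_mem_cone (div_nonneg (by norm_num) (by linarith)) hr
          rw [← this] at hmem
          exact hmem
        obtain ⟨k, u, f, hu, hf, hdsum⟩ := hdcone
        -- each summand is a nonneg multiple of d, in fact must vanish
        have hterm : ∀ i₀ : Fin k, u i₀ • f i₀ = 0 := by
          intro i₀
          by_cases hu0 : u i₀ = 0
          · rw [hu0, zero_smul]
          have hupos : 0 < u i₀ := lt_of_le_of_ne (hu i₀) (Ne.symm hu0)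
          set A := u i₀ • f i₀ with hA
          set B := ∑ i ∈ Finset.univ.erase i₀, u i • f i with hB
          have hAB : B + A = d := by
            rw [hA, hB, hdsum]
            exact Finset.sum_erase_add _ _ (Finset.mem_univ i₀)
          have hArec : A ∈ pSet M 0 :=
            rec_smul M (hDrec _ (hf i₀).1) (hu i₀)
          have hBrec : B ∈ pSet M 0 := by
            rw [hB]
            apply Finset.sum_induction _ (· ∈ pSet M 0)
              (fun a b ha hb => rec_add M ha hb) (rec_zero M)
            intro i _
            exact rec_smul M (hDrec _ (hf i).1) (hu i)
          have hyA : y + (2:ℝ) • A ∈ pSet M b :=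
            add_rec_mem M b hyP (rec_smul M hArec (by norm_num))
          have hyB : y + (2:ℝ) • B ∈ pSet M b :=
            add_rec_mem M b hyP (rec_smul M hBrec (by norm_num))
          have hydF : y + (1:ℝ) • d ∈ F := ⟨1, zero_le_one, rfl⟩
          have hmidF : (1/2 : ℝ) • (y + (2:ℝ) • A) + (1 - 1/2 : ℝ) • (y + (2:ℝ) • B) ∈ F := by
            have : (1/2 : ℝ) • (y + (2:ℝ) • A) + (1 - 1/2 : ℝ) • (y + (2:ℝ) • B)
                = y + (1:ℝ) • d := by
              rw [← hAB]
              ext j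
              simp only [Pi.add_apply, Pi.smul_apply, smul_eq_mul]
              ring
            rw [this]
            exact hydF
          obtain ⟨hAF, _⟩ := hFace.2 _ hyA _ hyB (1/2) (by norm_num) (by norm_num) hmidF
          obtain ⟨s₀, hs₀, hAs₀⟩ := hAF
          have h2A : (2:ℝ) • A = s₀ • d := add_left_cancel (by rw [← hAs₀])
          -- f i₀ is a positive multiple of d
          have hfne : f i₀ ≠ 0 := (hD _ (hf i₀).1).1
          have hs₀pos : 0 < s₀ := by
            rcases lt_or_eq_of_le hs₀ with h | h
            · exact h
            · exfalso
              have : (2:ℝ) • A = 0 := by rw [h2A, ← h, zero_smul]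
              have hA0 : A = 0 := by
                simpa using (smul_eq_zero.mp this).resolve_left (by norm_num)
              rw [hA] at hA0
              exact hfne ((smul_eq_zero.mp hA0).resolve_left hu0)
          have hfd : d = (2 * u i₀ / s₀) • f i₀ := by
            ext j
            have hj := congrFun h2A j
            simp only [hA, Pi.smul_apply, smul_eq_mul] at hj ⊢
            rw [eq_comm, show (2 * u i₀ / s₀ * f i₀ j) = (2 * (u i₀ * f i₀ j))/s₀ by ring,
              div_eq_iff (ne_of_gt hs₀pos)]
            linarith [hj]
          -- uniqueness of the representative forces f i₀ = d, contradiction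
          obtain ⟨d', hd'prop, hd'uniq⟩ := hDrep d ⟨hdne, y, hyP, hFace⟩
          have hd1 : d = d' := hd'uniq d ⟨hd, 1, one_pos, (one_smul ℝ d).symm⟩
          have hd2 : f i₀ = d' := hd'uniq (f i₀) ⟨by exact_mod_cast (hf i₀).1, 2 * u i₀ / s₀,
            by positivity, hfd⟩
          exact absurd (show f i₀ ∈ ({d} : Set (Fin q → ℝ)) by
            rw [Set.mem_singleton_iff, hd2, ← hd1]) (hf i₀).2
        have : d = 0 := by
          rw [hdsum]
          exact Finset.sum_eq_zero (fun i _ => hterm i)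
        exact hdne this
    -- but conv V is bounded: contradiction
    have hVfin : V.Finite := by rw [hV]; exact vertexSet_finite M b
    have hcompact := hVfin.isCompact_convexHull ℝ
    obtain ⟨R, hR⟩ := hcompact.isBounded.exists_norm_le
    have hdnorm : 0 < ‖d‖ := norm_pos_iff.mpr hdne
    have hR0 : 0 ≤ R := le_trans (norm_nonneg y)
      (by simpa using hR y (by simpa using hray_conv 0 le_rfl))
    set t := (R + ‖y‖ + 1) / ‖d‖ with ht
    have htpos : 0 < t := by positivity
    have hz := hray_conv t (le_of_lt htpos)
    have hzn := hR _ hz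
    have htd : ‖t • d‖ = R + ‖y‖ + 1 := by
      rw [norm_smul, Real.norm_eq_abs, abs_of_pos htpos, ht,
        div_mul_cancel₀ _ (ne_of_gt hdnorm)]
    have hle : ‖t • d‖ ≤ ‖y + t • d‖ + ‖y‖ := by
      have h9 : ‖t • d‖ = ‖(y + t • d) - y‖ := by
        congr 1
        abel
      rw [h9]
      exact norm_sub_le _ _
    rw [htd] at hle
    linarith
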